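/- Suppose g is a monotone submodular function on subsets of U' = {x_1,y_1,…,x_n,y_n} with g(∅)=0, satisfying for every i ∈ [n]: g({x_i, y_i}) ≤ g({x_i}) and g({x_i, y_i}) ≤ g({y_i}). Then g({x_1,…,x_n}) = g(U'). -/

import Mathlib

theorem stmt_12 (n : ℕ) (g : Finset (Fin n × Bool) → ℝ)
    (hmono : ∀ A B, A ⊆ B → g A ≤ g B)
    (hsub : ∀ A B, g (A ∪ B) + g (A ∩ B) ≤ g A + g B)
    (hzero : g ∅ = 0)
    (hfd1 : ∀ i : Fin n, g {(i, false), (i, true)} ≤ g {(i, false)})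
    (hfd2 : ∀ i : Fin n, g {(i, false), (i, true)} ≤ g {(i, true)}) :
    g (Finset.univ.image (fun i : Fin n => (i, false))) = g Finset.univ := by
  classical
  set X := Finset.univ.image (fun i : Fin n => (i, false)) with hX
  have key : ∀ (i : Fin n) (B : Finset (Fin n × Bool)), (i, false) ∈ B → (i, true) ∉ B →
      g (insert (i, true) B) ≤ g B := by
    intro i B hf ht
    have h1 := hsub {(i, false), (i, true)} B
    have hu : ({(i, false), (i, true)} : Finset (Fin n × Bool)) ∪ B = insert (i, true) B := by
      ext p
      simp only [Finset.mem_union, Finset.mem_insert, Finset.mem_singleton]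
      constructor
      · rintro ((h | h) | h) <;> simp_all
      · rintro (h | h) <;> simp_all
    have hi : ({(i, false), (i, true)} : Finset (Fin n × Bool)) ∩ B = {(i, false)} := by
      ext p
      simp only [Finset.mem_inter, Finset.mem_insert, Finset.mem_singleton]
      constructor
      · rintro ⟨h | h, hb⟩ <;> simp_all
      · rintro h; subst h; exact ⟨Or.inl rfl, hf⟩
    rw [hu, hi] at h1
    have h2 := hfd1 i
    linarith
  have main : ∀ T : Finset (Fin n), g (X ∪ T.image (fun i => (i, true))) ≤ g X := by
    intro T
    induction T using Finset.induction with
    | empty => simp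
    | insert _ _ hiT ih =>
      rename_i i T
      rw [Finset.image_insert, Finset.union_insert]
      have hf : (i, false) ∈ X ∪ T.image (fun i => (i, true)) := by
        simp [hX]
      have ht : (i, true) ∉ X ∪ T.image (fun i => (i, true)) := by
        simp [hX, hiT]
      exact le_trans (key i _ hf ht) ih
  have huniv : X ∪ Finset.univ.image (fun i : Fin n => (i, true)) = Finset.univ := by
    ext ⟨i, b⟩
    cases b <;> simp [hX]
  have h1 := main Finset.univ
  rw [huniv] at h1
  exact le_antisymm (hmono _ _ (Finset.subset_univ _)) h1
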